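/- Let M be the Riemannian universal cover of the punctured plane, realized as the set {(r,ζ) : r > 0, ζ ∈ ℝ} with length metric induced by the Riemannian metric dr² + r² dζ². Then the distance from (1,ζ) to (ε,0) is at most (1 - 1/ζ²) + 1/ζ + |1/ζ² - ε| for any ζ > 1 and ε > 0; in particular, the distance from (1,ζ) to points (ε,0) stays bounded by a constant close to 1 as ζ → ∞ and ε → 0. -/

import Mathlib

noncomputable def pp (x : ℝ) : ℝ := (max x 0)^2

lemma pp_of_nonpos {x : ℝ} (h : x ≤ 0) : pp x = 0 := by
  simp [pp, max_eq_right h]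

lemma pp_of_nonneg {x : ℝ} (h : 0 ≤ x) : pp x = x^2 := by
  simp [pp, max_eq_left h]

lemma pp_hasDerivAt (x : ℝ) : HasDerivAt pp (2 * max x 0) x := by
  rcases lt_trichotomy x 0 with h | h | h
  · have heq : pp =ᶠ[nhds x] fun _ => (0:ℝ) := by
      filter_upwards [Iio_mem_nhds h] with y hy
      exact pp_of_nonpos (le_of_lt hy)
    rw [max_eq_right h.le, mul_zero]
    exact (hasDerivAt_const x (0:ℝ)).congr_of_eventuallyEq heq
  · subst h
    rw [max_self, mul_zero]
    rw [hasDerivAt_iff_tendsto_slope]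
    have hb : ∀ y : ℝ, ‖slope pp 0 y‖ ≤ |y| := by
      intro y
      rcases eq_or_ne y 0 with rfl | hy
      · simp [slope]
      · have h0 : pp 0 = 0 := by simp [pp]
        rw [slope_def_field, h0, sub_zero, sub_zero, Real.norm_eq_abs, abs_div]
        rw [div_le_iff₀ (abs_pos.mpr hy)]
        have h1 : pp y ≤ y^2 := by
          rcases le_total y 0 with h' | h'
          · rw [pp_of_nonpos h']; positivity
          · rw [pp_of_nonneg h']
        have h2 : 0 ≤ pp y := by simp [pp]
        rw [abs_of_nonneg h2]
        calc pp y ≤ y^2 := h1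
          _ = |y| * |y| := by rw [abs_mul_abs_self]; ring
    have htend : Filter.Tendsto (fun y : ℝ => |y|) (nhdsWithin 0 {(0:ℝ)}ᶜ) (nhds 0) := by
      have := (continuous_abs.tendsto (0:ℝ)).mono_left (nhdsWithin_le_nhds (s := {(0:ℝ)}ᶜ))
      simpa using this
    exact squeeze_zero_norm hb htend
  · have heq : pp =ᶠ[nhds x] fun y => y^2 := by
      filter_upwards [Ioi_mem_nhds h] with y hy
      exact pp_of_nonneg (le_of_lt hy)
    rw [max_eq_left h.le]
    have : HasDerivAt (fun y : ℝ => y^2) (2*x) x := by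
      simpa using hasDerivAt_pow 2 x
    exact this.congr_of_eventuallyEq heq

lemma contDiff_pp : ContDiff ℝ 1 pp := by
  rw [contDiff_one_iff_deriv]
  refine ⟨fun x => (pp_hasDerivAt x).differentiableAt, ?_⟩
  have : deriv pp = fun x => 2 * max x 0 := funext fun x => (pp_hasDerivAt x).deriv
  rw [this]
  exact continuous_const.mul (continuous_id.max continuous_const)

noncomputable def Sm (x : ℝ) : ℝ := (pp x - 2 * pp (x-1) + pp (x-2))/2

noncomputable def Sm' (x : ℝ) : ℝ := max x 0 - 2 * max (x-1) 0 + max (x-2) 0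

lemma Sm_hasDerivAt (x : ℝ) : HasDerivAt Sm (Sm' x) x := by
  have h1 := pp_hasDerivAt x
  have h2 := (pp_hasDerivAt (x-1)).comp x ((hasDerivAt_id x).sub_const 1)
  have h3 := (pp_hasDerivAt (x-2)).comp x ((hasDerivAt_id x).sub_const 2)
  have := ((h1.sub (h2.const_mul 2)).add h3).div_const 2
  refine this.congr_deriv ?_
  unfold Sm'
  ring

@[continuity, fun_prop]
lemma Sm'_cont : Continuous Sm' := by
  unfold Sm'
  fun_prop

@[continuity, fun_prop]
lemma Sm_cont : Continuous Sm := by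
  unfold Sm pp
  fun_prop

lemma contDiff_Sm : ContDiff ℝ 1 Sm := by
  unfold Sm
  exact ((contDiff_pp.sub (contDiff_const.mul (contDiff_pp.comp (contDiff_id.sub contDiff_const)))).add (contDiff_pp.comp (contDiff_id.sub contDiff_const))).div_const 2

lemma Sm_of_nonpos {x : ℝ} (h : x ≤ 0) : Sm x = 0 := by
  rw [Sm, pp_of_nonpos h, pp_of_nonpos (by linarith), pp_of_nonpos (by linarith)]
  ring

lemma Sm_of_ge {x : ℝ} (h : 2 ≤ x) : Sm x = 1 := by
  rw [Sm, pp_of_nonneg (by linarith), pp_of_nonneg (by linarith), pp_of_nonneg (by linarith)]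
  ring

lemma Sm_nonneg (x : ℝ) : 0 ≤ Sm x := by
  rcases le_total x 0 with h | h
  · rw [Sm_of_nonpos h]
  · rcases le_total x 1 with h1 | h1
    · rw [Sm, pp_of_nonneg h, pp_of_nonpos (by linarith), pp_of_nonpos (by linarith)]
      nlinarith [sq_nonneg x]
    · rcases le_total x 2 with h2 | h2
      · rw [Sm, pp_of_nonneg h, pp_of_nonneg (by linarith), pp_of_nonpos (by linarith)]
        nlinarith
      · rw [Sm_of_ge h2]; norm_num

lemma Sm_le_one (x : ℝ) : Sm x ≤ 1 := by
  rcases le_total x 0 with h | h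
  · rw [Sm_of_nonpos h]; norm_num
  · rcases le_total x 1 with h1 | h1
    · rw [Sm, pp_of_nonneg h, pp_of_nonpos (by linarith), pp_of_nonpos (by linarith)]
      nlinarith
    · rcases le_total x 2 with h2 | h2
      · rw [Sm, pp_of_nonneg h, pp_of_nonneg (by linarith), pp_of_nonpos (by linarith)]
        nlinarith
      · rw [Sm_of_ge h2]

lemma Sm'_nonneg (x : ℝ) : 0 ≤ Sm' x := by
  unfold Sm'
  rcases le_total x 0 with h | h
  · rw [max_eq_right h, max_eq_right (by linarith), max_eq_right (by linarith)]; norm_num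
  · rcases le_total x 1 with h1 | h1
    · rw [max_eq_left h, max_eq_right (by linarith : x - 1 ≤ 0), max_eq_right (by linarith : x - 2 ≤ 0)]
      linarith
    · rcases le_total x 2 with h2 | h2
      · rw [max_eq_left h, max_eq_left (by linarith : (0:ℝ) ≤ x - 1), max_eq_right (by linarith : x - 2 ≤ 0)]
        linarith
      · rw [max_eq_left h, max_eq_left (by linarith : (0:ℝ) ≤ x - 1), max_eq_left (by linarith : (0:ℝ) ≤ x - 2)]
        linarith

lemma Sm'_of_nonpos {x : ℝ} (h : x ≤ 0) : Sm' x = 0 := by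
  unfold Sm'
  rw [max_eq_right h, max_eq_right (by linarith), max_eq_right (by linarith)]; ring

lemma Sm'_of_ge {x : ℝ} (h : 2 ≤ x) : Sm' x = 0 := by
  unfold Sm'
  rw [max_eq_left (by linarith), max_eq_left (by linarith), max_eq_left (by linarith)]; ring




/-- Length of a (C¹) path `γ(t) = (r(t), ζ(t))`, `t ∈ [0,1]`, for the Riemannian
metric `dr² + r² dζ²` on the universal cover of the punctured plane. -/
noncomputable def pathLength (γ : ℝ → ℝ × ℝ) : ℝ :=
  ∫ t in (0:ℝ)..1, Real.sqrt ((deriv (fun s => (γ s).1) t) ^ 2 +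
    ((γ t).1) ^ 2 * (deriv (fun s => (γ s).2) t) ^ 2)

/-- The induced length distance on `M = (0,∞) × ℝ`: the infimum of lengths of
C¹ paths joining the two points and staying in the region `r > 0`. -/
noncomputable def coverDist (x y : ℝ × ℝ) : ℝ :=
  sInf {L : ℝ | ∃ γ : ℝ → ℝ × ℝ, ContDiff ℝ 1 γ ∧
    (∀ t ∈ Set.Icc (0:ℝ) 1, 0 < (γ t).1) ∧ γ 0 = x ∧ γ 1 = y ∧ L = pathLength γ}

/-- Distance bound in the universal cover of the punctured plane: for ζ > 1 and
ε > 0, `d((1,ζ),(ε,0)) ≤ (1 - 1/ζ²) + 1/ζ + |1/ζ² - ε|`. -/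

theorem coverDist_one_zeta_to_eps_zero_le (ζ ε : ℝ) (hζ : 1 < ζ) (hε : 0 < ε) :
    coverDist (1, ζ) (ε, 0) ≤ (1 - 1 / ζ ^ 2) + 1 / ζ + |1 / ζ ^ 2 - ε| := by
  have hζ0 : (0:ℝ) < ζ := by linarith
  set a : ℝ := 1 / ζ^2 with ha
  have ha0 : 0 < a := by positivity
  have ha1 : a ≤ 1 := by
    rw [ha, div_le_one (by positivity)]; nlinarith
  set r : ℝ → ℝ := fun t => 1 - (1-a) * Sm (6*t) + (ε-a) * Sm (6*t-4) with hrdef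
  set z : ℝ → ℝ := fun t => ζ * (1 - Sm (6*t-2)) with hzdef
  set rd : ℝ → ℝ := fun t => 0 - (1-a) * (6 * Sm' (6*t)) + (ε-a) * (6 * Sm' (6*t-4)) with hrddef
  set zd : ℝ → ℝ := fun t => ζ * (0 - 6 * Sm' (6*t-2)) with hzddef
  set γ : ℝ → ℝ × ℝ := fun t => (r t, z t) with hγdef
  -- derivative helpers
  have hSm6 : ∀ c t : ℝ, HasDerivAt (fun s => Sm (6*s - c)) (6 * Sm' (6*t - c)) t := by
    intro c t
    have h1 : HasDerivAt (fun s : ℝ => 6*s - c) 6 t := by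
      simpa using ((hasDerivAt_id t).const_mul 6).sub_const c
    have := (Sm_hasDerivAt (6*t - c)).comp t h1
    exact this.congr_deriv (mul_comm _ _)
  have hS0 : ∀ t : ℝ, HasDerivAt (fun s => Sm (6*s)) (6 * Sm' (6*t)) t := by
    intro t
    have := hSm6 0 t
    simpa using this
  have hr : ∀ t, HasDerivAt r (rd t) t := by
    intro t
    exact ((hasDerivAt_const t (1:ℝ)).sub ((hS0 t).const_mul (1-a))).add
      ((hSm6 4 t).const_mul (ε-a))
  have hz : ∀ t, HasDerivAt z (zd t) t := by
    intro t
    exact ((hasDerivAt_const t (1:ℝ)).sub (hSm6 2 t)).const_mul ζ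
  have hdr : deriv r = rd := funext fun t => (hr t).deriv
  have hdz : deriv z = zd := funext fun t => (hz t).deriv
  -- smoothness
  have cγ : ContDiff ℝ 1 γ := by
    apply ContDiff.prodMk
    · exact (contDiff_const.sub (contDiff_const.mul (contDiff_Sm.comp
        (contDiff_const.mul contDiff_id)))).add (contDiff_const.mul (contDiff_Sm.comp
        ((contDiff_const.mul contDiff_id).sub contDiff_const)))
    · exact contDiff_const.mul (contDiff_const.sub (contDiff_Sm.comp
        ((contDiff_const.mul contDiff_id).sub contDiff_const)))
  -- positivity
  have hrpos : ∀ t ∈ Set.Icc (0:ℝ) 1, 0 < (γ t).1 := by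
    intro t ht
    show 0 < r t
    rcases le_total t (2/3 : ℝ) with h | h
    · have h4 : Sm (6*t - 4) = 0 := Sm_of_nonpos (by linarith)
      have h5 := Sm_le_one (6*t)
      have h6 := Sm_nonneg (6*t)
      rw [hrdef]
      simp only [h4]
      nlinarith
    · have h0 : Sm (6*t) = 1 := Sm_of_ge (by linarith)
      have h4a := Sm_nonneg (6*t-4)
      have h4b := Sm_le_one (6*t-4)
      rw [hrdef]
      simp only [h0]
      rcases le_total a ε with hc | hc <;> nlinarith
  -- endpoints
  have hγ0 : γ 0 = ((1:ℝ), ζ) := by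
    rw [hγdef, hrdef, hzdef]
    simp only
    have e1 : Sm (6*(0:ℝ)) = 0 := Sm_of_nonpos (by norm_num)
    have e2 : Sm (6*(0:ℝ)-4) = 0 := Sm_of_nonpos (by norm_num)
    have e3 : Sm (6*(0:ℝ)-2) = 0 := Sm_of_nonpos (by norm_num)
    rw [e1, e2, e3]
    norm_num
  have hγ1 : γ 1 = (ε, (0:ℝ)) := by
    rw [hγdef, hrdef, hzdef]
    simp only
    have e1 : Sm (6*(1:ℝ)) = 1 := Sm_of_ge (by norm_num)
    have e2 : Sm (6*(1:ℝ)-4) = 1 := Sm_of_ge (by norm_num)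
    have e3 : Sm (6*(1:ℝ)-2) = 1 := Sm_of_ge (by norm_num)
    rw [e1, e2, e3]
    norm_num
  -- membership and lower bound
  have hmem : pathLength γ ∈ {L : ℝ | ∃ γ' : ℝ → ℝ × ℝ, ContDiff ℝ 1 γ' ∧
      (∀ t ∈ Set.Icc (0:ℝ) 1, 0 < (γ' t).1) ∧ γ' 0 = ((1:ℝ), ζ) ∧ γ' 1 = (ε, (0:ℝ)) ∧
      L = pathLength γ'} := ⟨γ, cγ, hrpos, hγ0, hγ1, rfl⟩
  have hbdd : BddBelow {L : ℝ | ∃ γ' : ℝ → ℝ × ℝ, ContDiff ℝ 1 γ' ∧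
      (∀ t ∈ Set.Icc (0:ℝ) 1, 0 < (γ' t).1) ∧ γ' 0 = ((1:ℝ), ζ) ∧ γ' 1 = (ε, (0:ℝ)) ∧
      L = pathLength γ'} := by
    refine ⟨0, fun L hL => ?_⟩
    obtain ⟨g, _, _, _, _, rfl⟩ := hL
    exact intervalIntegral.integral_nonneg (by norm_num) (fun u _ => Real.sqrt_nonneg _)
  have hle := csInf_le hbdd hmem
  refine le_trans hle ?_
  -- rewrite pathLength with explicit derivatives
  have hpl : pathLength γ = ∫ t in (0:ℝ)..1,
      Real.sqrt ((rd t)^2 + (r t)^2 * (zd t)^2) := by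
    unfold pathLength
    have e1 : (fun s => (γ s).1) = r := rfl
    have e2 : (fun s => (γ s).2) = z := rfl
    rw [e1, e2, hdr, hdz]
  -- majorant and its antiderivative
  set F : ℝ → ℝ := fun t => (1-a) * (6 * Sm' (6*t)) + |ε-a| * (6 * Sm' (6*t-4)) +
    (a*ζ) * (6 * Sm' (6*t-2)) with hFdef
  set G : ℝ → ℝ := fun t => (1-a) * Sm (6*t) + |ε-a| * Sm (6*t-4) + (a*ζ) * Sm (6*t-2)
    with hGdef
  have hG : ∀ t, HasDerivAt G (F t) t := by
    intro t
    exact (((hS0 t).const_mul (1-a)).add ((hSm6 4 t).const_mul |ε-a|)).add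
      ((hSm6 2 t).const_mul (a*ζ))
  -- continuity facts
  have crd : Continuous rd := by rw [hrddef]; fun_prop
  have czd : Continuous zd := by rw [hzddef]; fun_prop
  have cr : Continuous r := by rw [hrdef]; fun_prop
  have cF : Continuous F := by rw [hFdef]; fun_prop
  have csq : Continuous fun t => Real.sqrt ((rd t)^2 + (r t)^2 * (zd t)^2) := by
    apply Continuous.sqrt
    fun_prop
  -- pointwise bound
  have key : ∀ A B : ℝ, Real.sqrt (A^2 + B^2) ≤ |A| + |B| := by
    intro A B
    rw [← Real.sqrt_sq (by positivity : (0:ℝ) ≤ |A| + |B|)]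
    apply Real.sqrt_le_sqrt
    nlinarith [abs_nonneg A, abs_nonneg B, sq_abs A, sq_abs B, abs_nonneg (A*B)]
  have habs_rd : ∀ t : ℝ, |rd t| = (1-a) * (6 * Sm' (6*t)) + |ε-a| * (6 * Sm' (6*t-4)) := by
    intro t
    rcases le_total t (1/3 : ℝ) with h | h
    · have h4 : Sm' (6*t - 4) = 0 := Sm'_of_nonpos (by linarith)
      have hs := Sm'_nonneg (6*t)
      have e : rd t = -((1-a) * (6 * Sm' (6*t))) := by rw [hrddef]; simp only [h4]; ring
      rw [e, abs_neg, abs_of_nonneg (by nlinarith), h4]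
      ring
    · have h0 : Sm' (6*t) = 0 := Sm'_of_ge (by linarith)
      have hs := Sm'_nonneg (6*t - 4)
      have e : rd t = (ε-a) * (6 * Sm' (6*t-4)) := by rw [hrddef]; simp only [h0]; ring
      rw [e, abs_mul, abs_of_nonneg (by nlinarith : (0:ℝ) ≤ 6 * Sm' (6*t-4)), h0]
      ring
  have habs_z : ∀ t : ℝ, |r t * zd t| = (a*ζ) * (6 * Sm' (6*t-2)) := by
    intro t
    rcases le_total t (1/3 : ℝ) with h | h
    · have h2 : Sm' (6*t - 2) = 0 := Sm'_of_nonpos (by linarith)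
      have e : zd t = 0 := by rw [hzddef]; simp [h2]
      rw [e, mul_zero, abs_zero, h2]
      ring
    · rcases le_total (2/3 : ℝ) t with h' | h'
      · have h2 : Sm' (6*t - 2) = 0 := Sm'_of_ge (by linarith)
        have e : zd t = 0 := by rw [hzddef]; simp [h2]
        rw [e, mul_zero, abs_zero, h2]
        ring
      · have e0 : Sm (6*t) = 1 := Sm_of_ge (by linarith)
        have e4 : Sm (6*t - 4) = 0 := Sm_of_nonpos (by linarith)
        have er : r t = a := by rw [hrdef]; simp only [e0, e4]; ring
        have hs := Sm'_nonneg (6*t - 2)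
        have e : r t * zd t = -((a*ζ) * (6 * Sm' (6*t-2))) := by
          rw [er, hzddef]; ring
        rw [e, abs_neg, abs_of_nonneg (by positivity)]
  have hpt : ∀ t ∈ Set.Icc (0:ℝ) 1,
      Real.sqrt ((rd t)^2 + (r t)^2 * (zd t)^2) ≤ F t := by
    intro t _
    have e : (r t)^2 * (zd t)^2 = (r t * zd t)^2 := by ring
    rw [e]
    calc Real.sqrt ((rd t)^2 + (r t * zd t)^2) ≤ |rd t| + |r t * zd t| := key _ _
      _ = F t := by rw [habs_rd t, habs_z t, hFdef]
  -- integral computation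
  have hFint : (∫ t in (0:ℝ)..1, F t) = G 1 - G 0 :=
    intervalIntegral.integral_eq_sub_of_hasDerivAt (fun t _ => hG t)
      (cF.intervalIntegrable 0 1)
  have hGval : G 1 - G 0 = (1-a) + |ε-a| + a*ζ := by
    rw [hGdef]
    simp only
    have e1 : Sm (6*(1:ℝ)) = 1 := Sm_of_ge (by norm_num)
    have e2 : Sm (6*(1:ℝ)-4) = 1 := Sm_of_ge (by norm_num)
    have e3 : Sm (6*(1:ℝ)-2) = 1 := Sm_of_ge (by norm_num)
    have f1 : Sm (6*(0:ℝ)) = 0 := Sm_of_nonpos (by norm_num)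
    have f2 : Sm (6*(0:ℝ)-4) = 0 := Sm_of_nonpos (by norm_num)
    have f3 : Sm (6*(0:ℝ)-2) = 0 := Sm_of_nonpos (by norm_num)
    rw [e1, e2, e3, f1, f2, f3]
    ring
  have hmono : pathLength γ ≤ (1-a) + |ε-a| + a*ζ := by
    rw [hpl, ← hGval, ← hFint]
    exact intervalIntegral.integral_mono_on (by norm_num)
      (csq.intervalIntegrable 0 1) (cF.intervalIntegrable 0 1) hpt
  refine le_trans hmono ?_
  have haz : a * ζ = 1 / ζ := by
    rw [ha]; field_simp
  rw [haz, abs_sub_comm]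
  linarith
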